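/- For discrete random variables with U_i = (M₃, S^{i-1}, S_{i+1}^n, Y₂^{i-1}): if the channel is memoryless with the Markov property (M, S^{i-1}, S_{i+1}^n, Y^{i-1}, Z^{i-1}) → (X_i, S_i) → (Y_i, Z_i) and the less noisy lemma gives I(Y₃^{i-1}; Y_{3,i} | M₃, Sⁿ) ≤ I(Y₂^{i-1}; Y_{3,i} | M₃, Sⁿ), then I(M₃; Y_{3,i} | Y₃^{i-1}, Sⁿ) ≤ I(M₃, S^{i-1}, S_{i+1}^n, Y₃^{i-1}; Y_{3,i} | S_i) ≤ I(U_i; Y_{3,i} | S_i). -/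

import Mathlib

open scoped Classical
open Finset

noncomputable section

/-- Probability that a discrete random variable `X` takes the value `x`,
under the pmf `p` on a finite sample space. -/
noncomputable def dpr {Ω 𝒳 : Type*} [Fintype Ω] (p : Ω → ℝ) (X : Ω → 𝒳) (x : 𝒳) : ℝ :=
  ∑ ω, if X ω = x then p ω else 0

/-- Shannon entropy (base 2) of a discrete random variable. -/
noncomputable def dH {Ω 𝒳 : Type*} [Fintype Ω] [Fintype 𝒳] (p : Ω → ℝ) (X : Ω → 𝒳) : ℝ :=
  - ∑ x, dpr p X x * Real.logb 2 (dpr p X x)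

/-- Mutual information I(X;Y). -/
noncomputable def dI {Ω 𝒳 𝒴 : Type*} [Fintype Ω] [Fintype 𝒳] [Fintype 𝒴]
    (p : Ω → ℝ) (X : Ω → 𝒳) (Y : Ω → 𝒴) : ℝ :=
  dH p X + dH p Y - dH p (fun ω => (X ω, Y ω))

/-- Conditional mutual information I(X;Y∣Z). -/
noncomputable def dCI {Ω 𝒳 𝒴 𝒵 : Type*} [Fintype Ω] [Fintype 𝒳] [Fintype 𝒴] [Fintype 𝒵]
    (p : Ω → ℝ) (X : Ω → 𝒳) (Y : Ω → 𝒴) (Z : Ω → 𝒵) : ℝ :=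
  dH p (fun ω => (X ω, Z ω)) + dH p (fun ω => (Y ω, Z ω)) - dH p Z
    - dH p (fun ω => (X ω, Y ω, Z ω))

/-- Conditional entropy H(X∣Y). -/
noncomputable def dCH {Ω 𝒳 𝒴 : Type*} [Fintype Ω] [Fintype 𝒳] [Fintype 𝒴]
    (p : Ω → ℝ) (X : Ω → 𝒳) (Y : Ω → 𝒴) : ℝ :=
  dH p (fun ω => (X ω, Y ω)) - dH p Y

/-- `p` is a probability mass function. -/
def IsPMF {Ω : Type*} [Fintype Ω] (p : Ω → ℝ) : Prop := (∀ ω, 0 ≤ p ω) ∧ ∑ ω, p ω = 1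

/-- The Markov chain X → Y → Z: X and Z are conditionally independent given Y. -/
def MarkovChain {Ω 𝒳 𝒴 𝒵 : Type*} [Fintype Ω] (p : Ω → ℝ)
    (X : Ω → 𝒳) (Y : Ω → 𝒴) (Z : Ω → 𝒵) : Prop :=
  ∀ x y z, dpr p (fun ω => (X ω, Y ω, Z ω)) (x, y, z) * dpr p Y y =
    dpr p (fun ω => (X ω, Y ω)) (x, y) * dpr p (fun ω => (Z ω, Y ω)) (z, y)

/-- Independence of two discrete random variables. -/
def dIndep {Ω 𝒳 𝒴 : Type*} [Fintype Ω] (p : Ω → ℝ) (X : Ω → 𝒳) (Y : Ω → 𝒴) : Prop :=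
  ∀ x y, dpr p (fun ω => (X ω, Y ω)) (x, y) = dpr p X x * dpr p Y y

end

section AuxLemmas
set_option linter.unusedSectionVars false

variable {Ω : Type*} [Fintype Ω] (p : Ω → ℝ)

lemma dpr_nonneg (hp : ∀ ω, 0 ≤ p ω) {𝒳 : Type*} (X : Ω → 𝒳) (x : 𝒳) : 0 ≤ dpr p X x := by
  unfold dpr
  refine Finset.sum_nonneg fun ω _ => ?_
  split <;> simp [hp ω]

lemma dpr_total (hp : IsPMF p) {𝒳 : Type*} [Fintype 𝒳] (X : Ω → 𝒳) : ∑ x, dpr p X x = 1 := by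
  unfold dpr
  rw [Finset.sum_comm]
  simpa using hp.2

lemma dpr_comp {𝒳 𝒳' : Type*} {e : 𝒳 → 𝒳'} (he : Function.Injective e) (X : Ω → 𝒳) (x : 𝒳) :
    dpr p (fun ω => e (X ω)) (e x) = dpr p X x := by
  unfold dpr
  simp [he.eq_iff]

lemma dpr_comp_zero {𝒳 𝒳' : Type*} {e : 𝒳 → 𝒳'} (X : Ω → 𝒳) {x' : 𝒳'}
    (hx : ∀ x, e x ≠ x') : dpr p (fun ω => e (X ω)) x' = 0 := by
  unfold dpr
  simp [hx]

lemma dH_comp {𝒳 𝒳' : Type*} [Fintype 𝒳] [Fintype 𝒳'] {e : 𝒳 → 𝒳'}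
    (he : Function.Injective e) (X : Ω → 𝒳) :
    dH p (fun ω => e (X ω)) = dH p X := by
  unfold dH
  congr 1
  rw [← Finset.sum_subset (Finset.subset_univ ((Finset.univ : Finset 𝒳).image e))]
  · rw [Finset.sum_image (fun a _ b _ h => he h)]
    refine Finset.sum_congr rfl fun x _ => ?_
    rw [dpr_comp p he]
  · intro x' _ hx'
    have hz : dpr p (fun ω => e (X ω)) x' = 0 := by
      refine dpr_comp_zero p X fun x hx => hx' ?_
      exact hx ▸ Finset.mem_image_of_mem e (Finset.mem_univ x)
    rw [hz]
    simp

end AuxLemmas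

section AuxLemmas2
set_option linter.unusedSectionVars false

variable {Ω 𝒳 𝒴 𝒵 : Type*} [Fintype Ω] [Fintype 𝒳] [Fintype 𝒴] [Fintype 𝒵] (p : Ω → ℝ)
variable (X : Ω → 𝒳) (Y : Ω → 𝒴) (Z : Ω → 𝒵)

lemma dpr_marg_xz (x : 𝒳) (z : 𝒵) :
    dpr p (fun ω => (X ω, Z ω)) (x, z)
      = ∑ y, dpr p (fun ω => (X ω, Y ω, Z ω)) (x, y, z) := by
  unfold dpr
  rw [Finset.sum_comm]
  refine Finset.sum_congr rfl fun ω _ => ?_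
  by_cases hx : X ω = x <;> by_cases hz : Z ω = z <;>
    simp [Prod.ext_iff, hx, hz, Finset.sum_ite_eq]

lemma dpr_marg_yz (y : 𝒴) (z : 𝒵) :
    dpr p (fun ω => (Y ω, Z ω)) (y, z)
      = ∑ x, dpr p (fun ω => (X ω, Y ω, Z ω)) (x, y, z) := by
  unfold dpr
  rw [Finset.sum_comm]
  refine Finset.sum_congr rfl fun ω _ => ?_
  by_cases hy : Y ω = y <;> by_cases hz : Z ω = z <;>
    simp [Prod.ext_iff, hy, hz, Finset.sum_ite_eq]

lemma dpr_marg_snd (z : 𝒵) :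
    dpr p Z z = ∑ x, dpr p (fun ω => (X ω, Z ω)) (x, z) := by
  unfold dpr
  rw [Finset.sum_comm]
  refine Finset.sum_congr rfl fun ω _ => ?_
  by_cases hz : Z ω = z <;> simp [Prod.ext_iff, hz, Finset.sum_ite_eq]

lemma gibbs_term (q a b c : ℝ) (hq : 0 ≤ q) (hqa : q ≤ a) (hqb : q ≤ b) (hac : a ≤ c) :
    (q - a * b / c) / Real.log 2
      ≤ q * (Real.logb 2 q + Real.logb 2 c - Real.logb 2 a - Real.logb 2 b) := by
  have hlog2 : 0 < Real.log 2 := Real.log_pos one_lt_two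
  rcases eq_or_lt_of_le hq with h0 | hqpos
  · rw [← h0]
    have ha : (0:ℝ) ≤ a := h0 ▸ hqa
    have hb : (0:ℝ) ≤ b := h0 ▸ hqb
    have hc : (0:ℝ) ≤ c := le_trans ha hac
    have : 0 ≤ a * b / c := by positivity
    simp only [zero_mul, zero_sub]
    exact div_nonpos_of_nonpos_of_nonneg (by linarith) hlog2.le
  · have ha : 0 < a := lt_of_lt_of_le hqpos hqa
    have hb : 0 < b := lt_of_lt_of_le hqpos hqb
    have hc : 0 < c := lt_of_lt_of_le ha hac
    have hcomb : Real.logb 2 q + Real.logb 2 c - Real.logb 2 a - Real.logb 2 b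
        = Real.log (q * c / (a * b)) / Real.log 2 := by
      rw [Real.log_div (by positivity) (by positivity),
        Real.log_mul hqpos.ne' hc.ne', Real.log_mul ha.ne' hb.ne']
      simp [Real.logb]
      ring
    rw [hcomb]
    set x := q * c / (a * b) with hx
    have hxpos : 0 < x := by positivity
    have hlow : 1 - 1 / x ≤ Real.log x := by
      have h := Real.log_le_sub_one_of_pos (show (0:ℝ) < 1 / x by positivity)
      rw [one_div, Real.log_inv] at h
      rw [one_div]
      linarith
    have h1 : (q - a * b / c) / Real.log 2 = q * ((1 - 1 / x) / Real.log 2) := by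
      rw [hx]
      field_simp
    rw [h1]
    have h2 : (1 - 1 / x) / Real.log 2 ≤ Real.log x / Real.log 2 :=
      (div_le_div_iff_of_pos_right hlog2).mpr hlow
    exact mul_le_mul_of_nonneg_left h2 hq

end AuxLemmas2

section AuxLemmas3
set_option linter.unusedSectionVars false

lemma sum_rot {𝒳 𝒴 𝒵 : Type*} [Fintype 𝒳] [Fintype 𝒴] [Fintype 𝒵] (f : 𝒳 → 𝒴 → 𝒵 → ℝ) :
    ∑ y, ∑ z, ∑ x, f x y z = ∑ x, ∑ y, ∑ z, f x y z := by
  calc ∑ y, ∑ z, ∑ x, f x y z = ∑ y, ∑ x, ∑ z, f x y z :=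
        Finset.sum_congr rfl fun y _ => Finset.sum_comm
    _ = ∑ x, ∑ y, ∑ z, f x y z := Finset.sum_comm

lemma sum_rot2 {𝒳 𝒴 𝒵 : Type*} [Fintype 𝒳] [Fintype 𝒴] [Fintype 𝒵] (f : 𝒳 → 𝒴 → 𝒵 → ℝ) :
    ∑ z, ∑ x, ∑ y, f x y z = ∑ x, ∑ y, ∑ z, f x y z := by
  calc ∑ z, ∑ x, ∑ y, f x y z = ∑ x, ∑ z, ∑ y, f x y z := Finset.sum_comm
    _ = ∑ x, ∑ y, ∑ z, f x y z := Finset.sum_congr rfl fun x _ => Finset.sum_comm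

variable {Ω 𝒳 𝒴 𝒵 : Type*} [Fintype Ω] [Fintype 𝒳] [Fintype 𝒴] [Fintype 𝒵] (p : Ω → ℝ)

lemma dCI_nonneg (hp : IsPMF p) (X : Ω → 𝒳) (Y : Ω → 𝒴) (Z : Ω → 𝒵) :
    0 ≤ dCI p X Y Z := by
  set q : 𝒳 → 𝒴 → 𝒵 → ℝ := fun x y z => dpr p (fun ω => (X ω, Y ω, Z ω)) (x, y, z) with hqdef
  set a : 𝒳 → 𝒵 → ℝ := fun x z => dpr p (fun ω => (X ω, Z ω)) (x, z) with hadef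
  set b : 𝒴 → 𝒵 → ℝ := fun y z => dpr p (fun ω => (Y ω, Z ω)) (y, z) with hbdef
  set c : 𝒵 → ℝ := fun z => dpr p Z z with hcdef
  have hq0 : ∀ x y z, 0 ≤ q x y z := fun x y z => dpr_nonneg p hp.1 _ _
  have ha_eq : ∀ x z, a x z = ∑ y, q x y z := fun x z => dpr_marg_xz p X Y Z x z
  have hb_eq : ∀ y z, b y z = ∑ x, q x y z := fun y z => dpr_marg_yz p X Y Z y z
  have hca : ∀ z, c z = ∑ x, a x z := fun z => dpr_marg_snd p X Z z
  have hcb : ∀ z, c z = ∑ y, b y z := fun z => dpr_marg_snd p Y Z z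
  have ha0 : ∀ x z, 0 ≤ a x z := fun x z => dpr_nonneg p hp.1 _ _
  have hb0 : ∀ y z, 0 ≤ b y z := fun y z => dpr_nonneg p hp.1 _ _
  have hc0 : ∀ z, 0 ≤ c z := fun z => dpr_nonneg p hp.1 _ _
  have hqa : ∀ x y z, q x y z ≤ a x z := fun x y z => by
    rw [ha_eq]
    exact Finset.single_le_sum (f := fun y => q x y z) (fun y _ => hq0 x y z) (Finset.mem_univ y)
  have hqb : ∀ x y z, q x y z ≤ b y z := fun x y z => by
    rw [hb_eq]
    exact Finset.single_le_sum (f := fun x => q x y z) (fun x _ => hq0 x y z) (Finset.mem_univ x)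
  have hac : ∀ x z, a x z ≤ c z := fun x z => by
    rw [hca]
    exact Finset.single_le_sum (f := fun x => a x z) (fun x _ => ha0 x z) (Finset.mem_univ x)
  -- entropy expansions as triple sums
  have hHxz : dH p (fun ω => (X ω, Z ω))
      = - ∑ x, ∑ y, ∑ z, q x y z * Real.logb 2 (a x z) := by
    unfold dH
    simp only [Fintype.sum_prod_type]
    congr 1
    refine Finset.sum_congr rfl fun x _ => ?_
    calc ∑ z, dpr p (fun ω => (X ω, Z ω)) (x, z) * Real.logb 2 (dpr p (fun ω => (X ω, Z ω)) (x, z))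
        = ∑ z, ∑ y, q x y z * Real.logb 2 (a x z) := by
          refine Finset.sum_congr rfl fun z _ => ?_
          rw [show dpr p (fun ω => (X ω, Z ω)) (x, z) = a x z from rfl, ha_eq, Finset.sum_mul]
      _ = ∑ y, ∑ z, q x y z * Real.logb 2 (a x z) := Finset.sum_comm
  have hHyz : dH p (fun ω => (Y ω, Z ω))
      = - ∑ x, ∑ y, ∑ z, q x y z * Real.logb 2 (b y z) := by
    unfold dH
    simp only [Fintype.sum_prod_type]
    rw [← sum_rot (fun x y z => q x y z * Real.logb 2 (b y z))]
    congr 1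
    refine Finset.sum_congr rfl fun y _ => Finset.sum_congr rfl fun z _ => ?_
    rw [show dpr p (fun ω => (Y ω, Z ω)) (y, z) = b y z from rfl, hb_eq, Finset.sum_mul]
  have hHz : dH p Z = - ∑ x, ∑ y, ∑ z, q x y z * Real.logb 2 (c z) := by
    unfold dH
    rw [← sum_rot2 (fun x y z => q x y z * Real.logb 2 (c z))]
    congr 1
    refine Finset.sum_congr rfl fun z _ => ?_
    calc dpr p Z z * Real.logb 2 (dpr p Z z)
        = (∑ x, ∑ y, q x y z) * Real.logb 2 (c z) := by
          rw [show (∑ x, ∑ y, q x y z) = c z by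
            rw [hca]; exact Finset.sum_congr rfl fun x _ => (ha_eq x z).symm]
      _ = ∑ x, ∑ y, q x y z * Real.logb 2 (c z) := by
          rw [Finset.sum_mul]
          exact Finset.sum_congr rfl fun x _ => Finset.sum_mul _ _ _
  have hHq : dH p (fun ω => (X ω, Y ω, Z ω))
      = - ∑ x, ∑ y, ∑ z, q x y z * Real.logb 2 (q x y z) := by
    unfold dH
    simp only [Fintype.sum_prod_type]
    rfl
  -- key identity
  have key : dCI p X Y Z = ∑ x, ∑ y, ∑ z, q x y z *
      (Real.logb 2 (q x y z) + Real.logb 2 (c z) - Real.logb 2 (a x z) - Real.logb 2 (b y z)) := by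
    have hsplit : (∑ x, ∑ y, ∑ z, q x y z *
        (Real.logb 2 (q x y z) + Real.logb 2 (c z) - Real.logb 2 (a x z) - Real.logb 2 (b y z)))
        = (∑ x, ∑ y, ∑ z, q x y z * Real.logb 2 (q x y z))
          + (∑ x, ∑ y, ∑ z, q x y z * Real.logb 2 (c z))
          - (∑ x, ∑ y, ∑ z, q x y z * Real.logb 2 (a x z))
          - (∑ x, ∑ y, ∑ z, q x y z * Real.logb 2 (b y z)) := by
      simp only [mul_add, mul_sub, Finset.sum_add_distrib, Finset.sum_sub_distrib]
    rw [hsplit]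
    unfold dCI
    rw [hHxz, hHyz, hHz, hHq]
    ring
  -- sums of q and β
  have hsumq : ∑ x, ∑ y, ∑ z, q x y z = 1 := by
    have h := dpr_total p hp (fun ω => (X ω, Y ω, Z ω))
    simp only [Fintype.sum_prod_type] at h
    exact h
  have hsumc : ∑ z, c z = 1 := dpr_total p hp Z
  have hsumβ : ∑ x, ∑ y, ∑ z, a x z * b y z / c z ≤ 1 := by
    rw [← sum_rot2 (fun x y z => a x z * b y z / c z)]
    have hz : ∀ z, ∑ x, ∑ y, a x z * b y z / c z ≤ c z := by
      intro z
      by_cases h : c z = 0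
      · have haz : ∀ x, a x z = 0 := fun x => le_antisymm (h ▸ hac x z) (ha0 x z)
        simp only [haz, zero_mul, zero_div, Finset.sum_const_zero]
        exact hc0 z
      · have hy : ∀ x, ∑ y, a x z * b y z / c z = a x z := by
          intro x
          calc ∑ y, a x z * b y z / c z = ∑ y, (a x z / c z) * b y z :=
                Finset.sum_congr rfl fun y _ => by ring
            _ = (a x z / c z) * ∑ y, b y z := (Finset.mul_sum _ _ _).symm
            _ = (a x z / c z) * c z := by rw [← hcb z]
            _ = a x z := by field_simp
        rw [Finset.sum_congr rfl fun x _ => hy x, ← hca z]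
    calc ∑ z, ∑ x, ∑ y, a x z * b y z / c z ≤ ∑ z, c z :=
          Finset.sum_le_sum fun z _ => hz z
      _ = 1 := hsumc
  -- conclude
  have hlog2 : 0 < Real.log 2 := Real.log_pos one_lt_two
  have hlb : (∑ x, ∑ y, ∑ z, (q x y z - a x z * b y z / c z)) / Real.log 2
      ≤ dCI p X Y Z := by
    rw [key]
    have : (∑ x, ∑ y, ∑ z, (q x y z - a x z * b y z / c z)) / Real.log 2
        = ∑ x, ∑ y, ∑ z, (q x y z - a x z * b y z / c z) / Real.log 2 := by
      simp only [Finset.sum_div]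
    rw [this]
    refine Finset.sum_le_sum fun x _ => Finset.sum_le_sum fun y _ => Finset.sum_le_sum fun z _ => ?_
    exact gibbs_term _ _ _ _ (hq0 x y z) (hqa x y z) (hqb x y z) (hac x z)
  have hdiff : ∑ x, ∑ y, ∑ z, (q x y z - a x z * b y z / c z)
      = (∑ x, ∑ y, ∑ z, q x y z) - ∑ x, ∑ y, ∑ z, a x z * b y z / c z := by
    simp only [Finset.sum_sub_distrib]
  have h0 : 0 ≤ (∑ x, ∑ y, ∑ z, (q x y z - a x z * b y z / c z)) / Real.log 2 := by
    rw [hdiff, hsumq]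
    exact div_nonneg (by linarith) hlog2.le
  linarith

end AuxLemmas3

section AuxLemmas4
set_option linter.unusedSectionVars false

variable {Ω 𝒳 𝒳' 𝒴 𝒵 𝒵' 𝒞 𝒱 : Type*} [Fintype Ω] [Fintype 𝒳] [Fintype 𝒳'] [Fintype 𝒴]
  [Fintype 𝒵] [Fintype 𝒵'] [Fintype 𝒞] [Fintype 𝒱] (p : Ω → ℝ)

/-- Relabel the first and third slots of conditional mutual information. -/
lemma dCI_relabel {eX : 𝒳 → 𝒳'} {eZ : 𝒵 → 𝒵'} (heX : Function.Injective eX)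
    (heZ : Function.Injective eZ) (X : Ω → 𝒳) (Y : Ω → 𝒴) (Z : Ω → 𝒵) :
    dCI p (fun ω => eX (X ω)) Y (fun ω => eZ (Z ω)) = dCI p X Y Z := by
  unfold dCI
  have h1 : dH p (fun ω => (eX (X ω), eZ (Z ω))) = dH p (fun ω => (X ω, Z ω)) :=
    dH_comp p (he := Function.Injective.prodMap heX heZ) (fun ω => (X ω, Z ω))
  have h2 : dH p (fun ω => (Y ω, eZ (Z ω))) = dH p (fun ω => (Y ω, Z ω)) :=
    dH_comp p (he := Function.Injective.prodMap (fun _ _ h => h) heZ) (fun ω => (Y ω, Z ω))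
  have h3 : dH p (fun ω => eZ (Z ω)) = dH p Z := dH_comp p heZ Z
  have h4 : dH p (fun ω => (eX (X ω), Y ω, eZ (Z ω))) = dH p (fun ω => (X ω, Y ω, Z ω)) :=
    dH_comp p (he := Function.Injective.prodMap heX
      (Function.Injective.prodMap (fun _ _ h => h) heZ)) (fun ω => (X ω, Y ω, Z ω))
  rw [h1, h2, h3, h4]

/-- Chain rule decomposition. -/
lemma dCI_chain (C : Ω → 𝒞) (V : Ω → 𝒱) (Y : Ω → 𝒴) (Z : Ω → 𝒵) :
    dCI p (fun ω => (C ω, V ω)) Y Z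
      = dCI p C Y Z + dCI p V Y (fun ω => (C ω, Z ω)) := by
  unfold dCI
  have e1 : dH p (fun ω => ((C ω, V ω), Z ω)) = dH p (fun ω => (V ω, (C ω, Z ω))) := by
    have he : Function.Injective (fun t : 𝒱 × 𝒞 × 𝒵 => ((t.2.1, t.1), t.2.2)) := by
      intro t t' h
      simp only [Prod.ext_iff] at h ⊢
      exact ⟨h.1.2, h.1.1, h.2⟩
    exact dH_comp p (he := he) (fun ω => (V ω, (C ω, Z ω)))
  have e2 : dH p (fun ω => ((C ω, V ω), Y ω, Z ω)) = dH p (fun ω => (V ω, Y ω, (C ω, Z ω))) := by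
    have he : Function.Injective (fun t : 𝒱 × 𝒴 × 𝒞 × 𝒵 => ((t.2.2.1, t.1), t.2.1, t.2.2.2)) := by
      intro t t' h
      simp only [Prod.ext_iff] at h ⊢
      exact ⟨h.1.2, h.2.1, h.1.1, h.2.2⟩
    exact dH_comp p (he := he) (fun ω => (V ω, Y ω, (C ω, Z ω)))
  have e3 : dH p (fun ω => (C ω, Y ω, Z ω)) = dH p (fun ω => (Y ω, (C ω, Z ω))) := by
    have he : Function.Injective (fun t : 𝒴 × 𝒞 × 𝒵 => (t.2.1, t.1, t.2.2)) := by
      intro t t' h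
      simp only [Prod.ext_iff] at h ⊢
      exact ⟨h.2.1, h.1, h.2.2⟩
    exact dH_comp p (he := he) (fun ω => (Y ω, (C ω, Z ω)))
  rw [e1, e2, e3]
  ring

end AuxLemmas4

/-- single-letterization of the R₃ bound in the converse of Theorem 4:
I(M₃; Y₃ᵢ | Y₃^{i-1}, Sⁿ) ≤ I(M₃, S^{i-1}, S_{i+1}^n, Y₃^{i-1}; Y₃ᵢ | Sᵢ)
  ≤ I(Uᵢ; Y₃ᵢ | Sᵢ), with Uᵢ = (M₃, S^{i-1}, S_{i+1}^n, Y₂^{i-1}). -/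
theorem single_letterization_R3 {Ω ℳ 𝒳 𝒮 𝒴₂ 𝒴₃ : Type*}
    [Fintype Ω] [Fintype ℳ] [Fintype 𝒳] [Fintype 𝒮] [Fintype 𝒴₂] [Fintype 𝒴₃]
    (n : ℕ) (p : Ω → ℝ) (hp : IsPMF p)
    (M₃ : Ω → ℳ) (X : Fin n → Ω → 𝒳) (S : Fin n → Ω → 𝒮)
    (Y₂ : Fin n → Ω → 𝒴₂) (Y₃ : Fin n → Ω → 𝒴₃) (i : Fin n)
    -- memorylessness: (M₃, S^{i-1}, S_{i+1}^n, Y₂^{i-1}, Y₃^{i-1}) → (Xᵢ,Sᵢ) → (Y₂ᵢ,Y₃ᵢ)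
    (hMem : MarkovChain p
      (fun ω => (M₃ ω,
          (fun j : Fin i.val => S ⟨j.val, j.isLt.trans i.isLt⟩ ω),
          (fun j : {j : Fin n // i < j} => S j.val ω),
          (fun j : Fin i.val => Y₂ ⟨j.val, j.isLt.trans i.isLt⟩ ω),
          (fun j : Fin i.val => Y₃ ⟨j.val, j.isLt.trans i.isLt⟩ ω)))
      (fun ω => (X i ω, S i ω))
      (fun ω => (Y₂ i ω, Y₃ i ω)))
    -- the less noisy lemma: I(Y₃^{i-1}; Y₃ᵢ | M₃, Sⁿ) ≤ I(Y₂^{i-1}; Y₃ᵢ | M₃, Sⁿ)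
    (hLN : dCI p (fun ω => fun j : Fin i.val => Y₃ ⟨j.val, j.isLt.trans i.isLt⟩ ω) (Y₃ i)
        (fun ω => (M₃ ω, fun j => S j ω))
      ≤ dCI p (fun ω => fun j : Fin i.val => Y₂ ⟨j.val, j.isLt.trans i.isLt⟩ ω) (Y₃ i)
        (fun ω => (M₃ ω, fun j => S j ω))) :
    dCI p M₃ (Y₃ i)
        (fun ω => ((fun j : Fin i.val => Y₃ ⟨j.val, j.isLt.trans i.isLt⟩ ω),
          (fun j => S j ω)))
      ≤ dCI p
        (fun ω => (M₃ ω,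
          (fun j : Fin i.val => S ⟨j.val, j.isLt.trans i.isLt⟩ ω),
          (fun j : {j : Fin n // i < j} => S j.val ω),
          (fun j : Fin i.val => Y₃ ⟨j.val, j.isLt.trans i.isLt⟩ ω)))
        (Y₃ i) (S i)
    ∧
    dCI p
        (fun ω => (M₃ ω,
          (fun j : Fin i.val => S ⟨j.val, j.isLt.trans i.isLt⟩ ω),
          (fun j : {j : Fin n // i < j} => S j.val ω),
          (fun j : Fin i.val => Y₃ ⟨j.val, j.isLt.trans i.isLt⟩ ω)))
        (Y₃ i) (S i)
      ≤ dCI p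
        (fun ω => (M₃ ω,
          (fun j : Fin i.val => S ⟨j.val, j.isLt.trans i.isLt⟩ ω),
          (fun j : {j : Fin n // i < j} => S j.val ω),
          (fun j : Fin i.val => Y₂ ⟨j.val, j.isLt.trans i.isLt⟩ ω)))
        (Y₃ i) (S i) := by
  -- abbreviations
  set Y := Y₃ i with hY
  -- recovery of a state sequence from past / future / present
  have recover : ∀ s s' : Fin n → 𝒮,
      (fun j : Fin i.val => s ⟨j.val, j.isLt.trans i.isLt⟩)
        = (fun j : Fin i.val => s' ⟨j.val, j.isLt.trans i.isLt⟩) →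
      (fun j : {j : Fin n // i < j} => s j.val) = (fun j : {j : Fin n // i < j} => s' j.val) →
      s i = s' i → s = s' := by
    intro s s' h1 h2 h3
    funext j
    rcases lt_trichotomy j i with h | h | h
    · have hj : j.val < i.val := h
      have := congrFun h1 ⟨j.val, hj⟩
      simpa using this
    · rw [h]; exact h3
    · exact congrFun h2 ⟨j, h⟩
  -- local notation
  let A : Ω → (Fin i.val → 𝒮) := fun ω => fun j => S ⟨j.val, j.isLt.trans i.isLt⟩ ω
  let B : Ω → ({j : Fin n // i < j} → 𝒮) := fun ω => fun j => S j.val ω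
  let Y3p : Ω → (Fin i.val → 𝒴₃) := fun ω => fun j => Y₃ ⟨j.val, j.isLt.trans i.isLt⟩ ω
  let Y2p : Ω → (Fin i.val → 𝒴₂) := fun ω => fun j => Y₂ ⟨j.val, j.isLt.trans i.isLt⟩ ω
  constructor
  · -- first inequality
    -- relabel the conditioning (Y₃^{i-1}, Sⁿ) ↦ ((A,B,Y₃^{i-1}), Sᵢ)
    have he1 : Function.Injective
        (fun t : (Fin i.val → 𝒴₃) × (Fin n → 𝒮) =>
          (((fun j : Fin i.val => t.2 ⟨j.val, j.isLt.trans i.isLt⟩),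
            (fun j : {j : Fin n // i < j} => t.2 j.val), t.1), t.2 i)) := by
      rintro ⟨y, s⟩ ⟨y', s'⟩ h
      simp only [Prod.ext_iff] at h
      exact Prod.ext h.1.2.2 (recover s s' h.1.1 h.1.2.1 h.2)
    have step1 : dCI p M₃ Y
        (fun ω => ((fun j : Fin i.val => Y₃ ⟨j.val, j.isLt.trans i.isLt⟩ ω), (fun j => S j ω)))
        = dCI p M₃ Y (fun ω => ((A ω, B ω, Y3p ω), S i ω)) := by
      exact (dCI_relabel p (eX := (id : ℳ → ℳ)) (fun _ _ h => h) he1 M₃ Y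
        (fun ω => (Y3p ω, fun j => S j ω))).symm
    rw [step1]
    have step2 : dCI p M₃ Y (fun ω => ((A ω, B ω, Y3p ω), S i ω))
        ≤ dCI p (fun ω => ((A ω, B ω, Y3p ω), M₃ ω)) Y (S i) := by
      have h := dCI_chain p (fun ω => (A ω, B ω, Y3p ω)) M₃ Y (S i)
      have h0 := dCI_nonneg p hp (fun ω => (A ω, B ω, Y3p ω)) Y (S i)
      linarith
    refine le_trans step2 (le_of_eq ?_)
    have he2 : Function.Injective
        (fun t : ((Fin i.val → 𝒮) × ({j : Fin n // i < j} → 𝒮) × (Fin i.val → 𝒴₃)) × ℳ =>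
          (t.2, t.1.1, t.1.2.1, t.1.2.2)) := by
      rintro ⟨⟨a, b, y⟩, m⟩ ⟨⟨a', b', y'⟩, m'⟩ h
      simp only [Prod.ext_iff] at h ⊢
      exact ⟨⟨h.2.1, h.2.2.1, h.2.2.2⟩, h.1⟩
    exact (dCI_relabel p (eZ := (id : 𝒮 → 𝒮)) he2 (fun _ _ h => h)
      (fun ω => ((A ω, B ω, Y3p ω), M₃ ω)) Y (S i)).symm
  · -- second inequality
    have he5 : Function.Injective
        (fun t : (ℳ × (Fin i.val → 𝒮) × ({j : Fin n // i < j} → 𝒮)) × (Fin i.val → 𝒴₃) =>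
          (t.1.1, t.1.2.1, t.1.2.2, t.2)) := by
      rintro ⟨⟨m, a, b⟩, y⟩ ⟨⟨m', a', b'⟩, y'⟩ h
      simp only [Prod.ext_iff] at h ⊢
      exact ⟨⟨h.1, h.2.1, h.2.2.1⟩, h.2.2.2⟩
    have he5' : Function.Injective
        (fun t : (ℳ × (Fin i.val → 𝒮) × ({j : Fin n // i < j} → 𝒮)) × (Fin i.val → 𝒴₂) =>
          (t.1.1, t.1.2.1, t.1.2.2, t.2)) := by
      rintro ⟨⟨m, a, b⟩, y⟩ ⟨⟨m', a', b'⟩, y'⟩ h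
      simp only [Prod.ext_iff] at h ⊢
      exact ⟨⟨h.1, h.2.1, h.2.2.1⟩, h.2.2.2⟩
    have h3 : dCI p
        (fun ω => (M₃ ω, A ω, B ω, Y3p ω)) Y (S i)
        = dCI p (fun ω => ((M₃ ω, A ω, B ω), Y3p ω)) Y (S i) :=
      dCI_relabel p (eZ := (id : 𝒮 → 𝒮)) he5 (fun _ _ h => h)
        (fun ω => ((M₃ ω, A ω, B ω), Y3p ω)) Y (S i)
    have h2 : dCI p
        (fun ω => (M₃ ω, A ω, B ω, Y2p ω)) Y (S i)
        = dCI p (fun ω => ((M₃ ω, A ω, B ω), Y2p ω)) Y (S i) :=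
      dCI_relabel p (eZ := (id : 𝒮 → 𝒮)) he5' (fun _ _ h => h)
        (fun ω => ((M₃ ω, A ω, B ω), Y2p ω)) Y (S i)
    rw [show (fun ω => (M₃ ω, A ω, B ω, Y3p ω)) = fun ω => (M₃ ω,
          (fun j : Fin i.val => S ⟨j.val, j.isLt.trans i.isLt⟩ ω),
          (fun j : {j : Fin n // i < j} => S j.val ω),
          (fun j : Fin i.val => Y₃ ⟨j.val, j.isLt.trans i.isLt⟩ ω)) from rfl] at h3
    rw [show (fun ω => (M₃ ω, A ω, B ω, Y2p ω)) = fun ω => (M₃ ω,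
          (fun j : Fin i.val => S ⟨j.val, j.isLt.trans i.isLt⟩ ω),
          (fun j : {j : Fin n // i < j} => S j.val ω),
          (fun j : Fin i.val => Y₂ ⟨j.val, j.isLt.trans i.isLt⟩ ω)) from rfl] at h2
    rw [h3, h2]
    have hc3 := dCI_chain p (fun ω => (M₃ ω, A ω, B ω)) Y3p Y (S i)
    have hc2 := dCI_chain p (fun ω => (M₃ ω, A ω, B ω)) Y2p Y (S i)
    rw [hc3, hc2]
    -- relabel hLN conditioning (M₃, Sⁿ) ↦ ((M₃,A,B), Sᵢ)
    have he4 : Function.Injective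
        (fun t : ℳ × (Fin n → 𝒮) =>
          ((t.1, (fun j : Fin i.val => t.2 ⟨j.val, j.isLt.trans i.isLt⟩),
            (fun j : {j : Fin n // i < j} => t.2 j.val)), t.2 i)) := by
      rintro ⟨m, s⟩ ⟨m', s'⟩ h
      simp only [Prod.ext_iff] at h
      exact Prod.ext h.1.1 (recover s s' h.1.2.1 h.1.2.2 h.2)
    have hr3 : dCI p Y3p Y (fun ω => ((M₃ ω, A ω, B ω), S i ω))
        = dCI p Y3p Y (fun ω => (M₃ ω, fun j => S j ω)) :=
      dCI_relabel p (eX := (id : (Fin i.val → 𝒴₃) → _)) (fun _ _ h => h) he4 Y3p Y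
        (fun ω => (M₃ ω, fun j => S j ω))
    have hr2 : dCI p Y2p Y (fun ω => ((M₃ ω, A ω, B ω), S i ω))
        = dCI p Y2p Y (fun ω => (M₃ ω, fun j => S j ω)) :=
      dCI_relabel p (eX := (id : (Fin i.val → 𝒴₂) → _)) (fun _ _ h => h) he4 Y2p Y
        (fun ω => (M₃ ω, fun j => S j ω))
    have := hLN
    rw [← hr3, ← hr2] at this
    linarith
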